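/- arXiv:2512.01985 — 6 statements merged into one kernel-verified Lean document; each statement's English description precedes it below -/
import Mathlib

section
/- Let T be a labeled rooted tree and β ∈ ℝ. Then (i) for every pruning P of T, Q(T; β) ≤ c_β(P), and (ii) there exists a pruning P̃ of T such that Q(T; β) = c_β(P̃). -/
/-- A finitely-branching rooted tree whose every node carries two real labels
`a` and `b` (representing the incremental informations `ΔI_X` and `ΔI_Y`). -/
inductive LTree : Type where
  | node (a b : ℝ) (k : ℕ) (children : Fin k → LTree) : LTree

/-- The Q-function from Q-tree search:
`Q(T; β) = 0` if the root of `T` has no children, and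
`Q(T; β) = min (a(r) − β·b(r) + Σᵢ Q(Tᵢ; β)) 0` if the root `r` of `T` has
child subtrees `T₁, …, T_k` with `k ≥ 1`. -/
noncomputable def Qfun : LTree → ℝ → ℝ
  | .node a b k c, β =>
      if k = 0 then 0 else min (a - β * b + ∑ i : Fin k, Qfun (c i) β) 0

/-- Every node of the tree satisfies the predicate `p` on its label pair. -/
def ForallNodes (p : ℝ → ℝ → Prop) : LTree → Prop
  | .node a b k c => p a b ∧ ∀ i : Fin k, ForallNodes p (c i)

/-- `IsPruning P T` : `P` is a pruning of `T`.  The single-node tree carrying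
the root labels of `T` is a pruning of `T`; and if `T` has root `r` with child
subtrees `T₁, …, T_k` (`k ≥ 1`) and `Pᵢ` is a pruning of `Tᵢ` for each `i`,
then the tree with root `r` and child subtrees `P₁, …, P_k` is a pruning of `T`. -/
inductive IsPruning : LTree → LTree → Prop where
  | root (a b : ℝ) (k : ℕ) (c : Fin k → LTree) (f0 : Fin 0 → LTree) :
      IsPruning (.node a b 0 f0) (.node a b k c)
  | step (a b : ℝ) (k : ℕ) (hk : 0 < k) (c P : Fin k → LTree)
      (h : ∀ i, IsPruning (P i) (c i)) :
      IsPruning (.node a b k P) (.node a b k c)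

/-- `c_β(P)` : the sum of `a(s) − β·b(s)` over the interior nodes `s` of `P`
(nodes with at least one child). -/
noncomputable def cost (β : ℝ) : LTree → ℝ
  | .node a b k c =>
      if k = 0 then 0 else (a - β * b) + ∑ i : Fin k, cost β (c i)

/-- **Lemma 1 of Q-tree search.**  For every labeled rooted tree `T` and every
`β ∈ ℝ`: (i) `Q(T; β) ≤ c_β(P)` for every pruning `P` of `T`, and (ii) there
exists a pruning `P̃` of `T` with `Q(T; β) = c_β(P̃)`. -/
theorem Qfun_le_cost_and_attained (T : LTree) (β : ℝ) :
    (∀ P : LTree, IsPruning P T → Qfun T β ≤ cost β P) ∧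
    (∃ P : LTree, IsPruning P T ∧ Qfun T β = cost β P) := by
  induction T with
  | node a b k c ih =>
    by_cases hk : k = 0
    · subst hk
      constructor
      · intro P hP
        cases hP with
        | root => simp [Qfun, cost]
        | step _ _ _ hk' => exact absurd hk' (lt_irrefl 0)
      · exact ⟨.node a b 0 c, .root a b 0 c c, by simp [Qfun, cost]⟩
    · have hQ : Qfun (.node a b k c) β
          = min (a - β * b + ∑ i : Fin k, Qfun (c i) β) 0 := by
        simp [Qfun, hk]
      constructor
      · intro P hP
        cases hP with
        | root _ _ _ _ f0 =>
          rw [hQ]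
          simp [cost]
        | step _ _ _ hk' _ P h =>
          rw [hQ]
          refine le_trans (min_le_left _ _) ?_
          rw [cost]
          rw [if_neg hk]
          gcongr with i
          exact ((ih i).1) (P i) (h i)
      · by_cases hs : a - β * b + ∑ i : Fin k, Qfun (c i) β ≤ 0
        · choose P hP hQP using fun i => (ih i).2
          refine ⟨.node a b k P, .step a b k (Nat.pos_of_ne_zero hk) c P hP, ?_⟩
          rw [hQ, cost, if_neg hk, min_eq_left hs]
          congr 1
          exact Finset.sum_congr rfl fun i _ => hQP i
        · refine ⟨.node a b 0 (Fin.elim0), .root a b k c _, ?_⟩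
          rw [hQ, min_eq_right (le_of_not_ge hs)]
          simp [cost]
end

section
/- Let T be a labeled rooted tree and β ∈ ℝ. Then Q(T; β) is the least element of the set {c_β(P) : P a pruning of T}; that is, Q(T; β) = min{c_β(P) : P a pruning of T}. (Interpreting T as the finest-resolution tree, this says the root Q-value equals the minimum over all trees of I_X − β·I_Y.) -/
/-- **Proposition 1.**  The root Q-value is the least element of the set of
values `c_β(P)` over all prunings `P` of `T`; i.e.
`Q(T; β) = min {c_β(P) : P a pruning of T}`. -/
theorem Qfun_isLeast_cost (T : LTree) (β : ℝ) :
    IsLeast {v : ℝ | ∃ P : LTree, IsPruning P T ∧ v = cost β P} (Qfun T β) := by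
  induction T with
  | node a b k c ih =>
    constructor
    · -- membership
      rcases Nat.eq_zero_or_pos k with hk | hk
      · subst hk
        refine ⟨.node a b 0 c, IsPruning.root a b 0 c c, ?_⟩
        simp [Qfun, cost]
      · have hk0 : k ≠ 0 := hk.ne'
        by_cases hle : a - β * b + ∑ i : Fin k, Qfun (c i) β ≤ 0
        · choose P hP hcost using fun i => (ih i).1
          refine ⟨.node a b k P, IsPruning.step a b k hk c P hP, ?_⟩
          simp only [Qfun, cost, if_neg hk0]
          rw [min_eq_left hle]
          congr 1
          exact Finset.sum_congr rfl fun i _ => hcost i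
        · refine ⟨.node a b 0 (Fin.elim0), IsPruning.root a b k c _, ?_⟩
          simp [Qfun, cost, if_neg hk0, min_eq_right (le_of_not_ge hle)]
    · -- lower bound
      rintro v ⟨P, hP, rfl⟩
      cases hP with
      | root a b k c f0 =>
        simp only [cost, if_pos rfl]
        rcases Nat.eq_zero_or_pos k with hk | hk
        · subst hk; simp [Qfun]
        · simp only [Qfun, if_neg hk.ne']
          exact min_le_right _ _
      | step a b k hk c P h =>
        simp only [Qfun, cost, if_neg hk.ne']
        refine le_trans (min_le_left _ _) ?_
        have : ∀ i, Qfun (c i) β ≤ cost β (P i) := fun i => (ih i).2 ⟨P i, h i, rfl⟩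
        gcongr
        exact this _
end

section
/- Let T be a labeled rooted tree all of whose node labels satisfy a(t) ≥ 0 and b(t) ≥ 0, and suppose the root r of T has at least one child and b(r) > 0. Then for every β > a(r)/b(r) one has Q(T; β) < 0; consequently the Q-critical value satisfies sSup{β ≥ 0 : Q(T; β) = 0} ≤ a(r)/b(r), i.e., β^Q_cr(r) ≤ β_cr(r). -/

lemma Qfun_nonpos : ∀ (T : LTree) (β : ℝ), Qfun T β ≤ 0
  | .node a b k c, β => by
    simp only [Qfun]
    split
    · exact le_refl 0
    · exact min_le_right _ _

/-- If all node labels of `T` satisfy `a(t) ≥ 0` and `b(t) ≥ 0`, the root `r`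
of `T` has at least one child, and `b(r) > 0`, then `Q(T; β) < 0` for every
`β > a(r)/b(r)`; consequently the Q-critical value
`β^Q_cr(r) = sSup {β ≥ 0 : Q(T; β) = 0}` satisfies
`β^Q_cr(r) ≤ β_cr(r) = a(r)/b(r)`. -/
theorem QCritical_le_one_step_critical (a b : ℝ) (k : ℕ) (hk : 0 < k)
    (c : Fin k → LTree)
    (hlab : ForallNodes (fun a' b' => 0 ≤ a' ∧ 0 ≤ b') (LTree.node a b k c))
    (hb : 0 < b) :
    (∀ β : ℝ, a / b < β → Qfun (LTree.node a b k c) β < 0) ∧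
    sSup {β : ℝ | 0 ≤ β ∧ Qfun (LTree.node a b k c) β = 0} ≤ a / b := by
  have key : ∀ β : ℝ, a / b < β → Qfun (LTree.node a b k c) β < 0 := by
    intro β hβ
    have hab : a - β * b < 0 := by
      have := (div_lt_iff₀ hb).mp hβ
      linarith
    have hsum : ∑ i : Fin k, Qfun (c i) β ≤ 0 :=
      Finset.sum_nonpos fun i _ => Qfun_nonpos (c i) β
    simp only [Qfun, Nat.pos_iff_ne_zero.mp hk, if_neg (Nat.pos_iff_ne_zero.mp hk)]
    exact min_lt_iff.mpr (Or.inl (by linarith))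
  refine ⟨key, ?_⟩
  have ha : 0 ≤ a := hlab.1.1
  have hd : 0 ≤ a / b := div_nonneg ha hb.le
  apply Real.sSup_le _ hd
  rintro β ⟨hβ0, hβQ⟩
  by_contra h
  push_neg at h
  exact absurd hβQ (ne_of_lt (key β h))
end

section
/- Let A be an m × n real matrix with the tree-constraint row structure, and let c ∈ ℝⁿ. Then the linear program min{cᵀz : A z ≤ 0, 0 ≤ z ≤ 1} attains its minimum at an integer point: there exists z* ∈ ℝⁿ with every coordinate of z* in {0, 1}, A z* ≤ 0 (componentwise), 0 ≤ z* ≤ 1, and cᵀz* ≤ cᵀz for every z ∈ ℝⁿ satisfying A z ≤ 0 and 0 ≤ z ≤ 1. (Hence the integer program and its linear-programming relaxation have equal optimal values.) -/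
set_option maxHeartbeats 1000000

open intervalIntegral MeasureTheory

/-- `A` has the tree-constraint row structure: every row of `A` contains
exactly one entry equal to `1` and exactly one entry equal to `-1`, lying in
two distinct columns, and all of its other entries equal `0`. -/
def TreeRowStructure {m n : ℕ} (A : Matrix (Fin m) (Fin n) ℝ) : Prop :=
  ∀ i : Fin m, ∃ j₁ j₂ : Fin n, j₁ ≠ j₂ ∧ A i j₁ = 1 ∧ A i j₂ = -1 ∧
    ∀ j : Fin n, j ≠ j₁ → j ≠ j₂ → A i j = 0

/-- The step function `t ↦ if t ≤ a then 1 else 0` integrates to `a` over `[0,1]`. -/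
lemma step_integral {a : ℝ} (h0 : 0 ≤ a) (h1 : a ≤ 1) :
    ∫ t in (0:ℝ)..1, (if t ≤ a then (1:ℝ) else 0) = a := by
  have hanti : Antitone (fun t : ℝ => if t ≤ a then (1:ℝ) else 0) := by
    intro s t hst
    by_cases h : t ≤ a
    · simp [h, le_trans hst h]
    · by_cases h' : s ≤ a <;> simp [h, h']
  have hint1 : IntervalIntegrable (fun t : ℝ => if t ≤ a then (1:ℝ) else 0) volume 0 a :=
    hanti.intervalIntegrable
  have hint2 : IntervalIntegrable (fun t : ℝ => if t ≤ a then (1:ℝ) else 0) volume a 1 :=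
    hanti.intervalIntegrable
  rw [← integral_add_adjacent_intervals hint1 hint2]
  have e1 : (∫ t in (0:ℝ)..a, (if t ≤ a then (1:ℝ) else 0)) = a := by
    rw [integral_congr (g := fun _ => (1:ℝ)) ?_]
    · simp
    · intro t ht
      rw [Set.uIcc_of_le h0] at ht
      simp [ht.2]
  have e2 : (∫ t in (a:ℝ)..1, (if t ≤ a then (1:ℝ) else 0)) = 0 := by
    rw [intervalIntegral.integral_congr_ae (g := fun _ => (0:ℝ)) ?_]
    · simp
    · filter_upwards with t ht
      rw [Set.uIoc_of_le h1] at ht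
      simp [not_le.mpr ht.1]
  rw [e1, e2, add_zero]

/-- For an `m × n` real matrix `A` with the tree-constraint row structure and
any cost vector `c`, the linear program `min {cᵀz : A z ≤ 0, 0 ≤ z ≤ 1}`
attains its minimum at an integer (in fact `{0,1}`-valued) point. -/
theorem lp_attains_min_at_integer_point
    {m n : ℕ} (A : Matrix (Fin m) (Fin n) ℝ) (hA : TreeRowStructure A)
    (c : Fin n → ℝ) :
    ∃ z : Fin n → ℝ, (∀ j, z j = 0 ∨ z j = 1) ∧
      (∀ i, A.mulVec z i ≤ 0) ∧ (∀ j, 0 ≤ z j ∧ z j ≤ 1) ∧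
      ∀ w : Fin n → ℝ, (∀ i, A.mulVec w i ≤ 0) → (∀ j, 0 ≤ w j ∧ w j ≤ 1) →
        ∑ j, c j * z j ≤ ∑ j, c j * w j := by
  classical
  choose j₁ j₂ hne h1 h2 h0 using hA
  -- mulVec formula
  have key : ∀ (w : Fin n → ℝ) (i : Fin m), A.mulVec w i = w (j₁ i) - w (j₂ i) := by
    intro w i
    have hpt : ∀ j, A i j * w j =
        (if j = j₁ i then w j else 0) + (if j = j₂ i then -(w j) else 0) := by
      intro j
      by_cases hj1 : j = j₁ i
      · subst hj1
        rw [if_pos rfl, if_neg (hne i), h1 i, one_mul, add_zero]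
      · by_cases hj2 : j = j₂ i
        · subst hj2
          rw [if_neg hj1, if_pos rfl, h2 i, zero_add, neg_one_mul]
        · rw [h0 i j hj1 hj2, if_neg hj1, if_neg hj2, zero_mul, add_zero]
    simp only [Matrix.mulVec, dotProduct]
    rw [Finset.sum_congr rfl (fun j _ => hpt j), Finset.sum_add_distrib,
      Finset.sum_ite_eq' Finset.univ (j₁ i) w,
      Finset.sum_ite_eq' Finset.univ (j₂ i) (fun j => -(w j))]
    simp [sub_eq_add_neg]
  -- indicator vectors
  set ind : (Fin n → Bool) → Fin n → ℝ := fun b j => if b j then 1 else 0 with hind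
  -- feasible boolean vectors
  set S : Finset (Fin n → Bool) :=
    Finset.univ.filter (fun b => ∀ i, A.mulVec (ind b) i ≤ 0) with hS
  have hb0 : (fun _ : Fin n => false) ∈ S := by
    rw [hS, Finset.mem_filter]
    refine ⟨Finset.mem_univ _, fun i => ?_⟩
    rw [key]
    simp [hind]
  obtain ⟨b, hbS, hbmin⟩ := S.exists_min_image (fun b => ∑ j, c j * ind b j) ⟨_, hb0⟩
  rw [hS, Finset.mem_filter] at hbS
  refine ⟨ind b, ?_, hbS.2, ?_, ?_⟩
  · intro j; by_cases h : b j <;> simp [hind, h]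
  · intro j; by_cases h : b j <;> simp [hind, h]
  · intro w hw hwb
    -- threshold vectors
    have hthresh : ∀ t : ℝ, (fun j => decide (t ≤ w j)) ∈ S := by
      intro t
      rw [hS, Finset.mem_filter]
      refine ⟨Finset.mem_univ _, fun i => ?_⟩
      rw [key]
      have hwle : w (j₁ i) ≤ w (j₂ i) := by
        have := hw i; rw [key] at this; linarith
      by_cases h : t ≤ w (j₁ i)
      · simp [hind, h, le_trans h hwle]
      · by_cases h' : t ≤ w (j₂ i) <;> simp [hind, h, h']
    have hptwise : ∀ t : ℝ,
        (∑ j, c j * ind b j) ≤ ∑ j, c j * (if t ≤ w j then (1:ℝ) else 0) := by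
      intro t
      have := hbmin _ (hthresh t)
      simpa [hind] using this
    -- integrability
    have hint : ∀ j : Fin n,
        IntervalIntegrable (fun t => c j * (if t ≤ w j then (1:ℝ) else 0)) volume 0 1 := by
      intro j
      have hanti : Antitone (fun t : ℝ => if t ≤ w j then (1:ℝ) else 0) := by
        intro s t hst
        by_cases h : t ≤ w j
        · simp [h, le_trans hst h]
        · by_cases h' : s ≤ w j <;> simp [h, h']
      exact (hanti.intervalIntegrable).const_mul _
    have hintsum : IntervalIntegrable
        (fun t => ∑ j, c j * (if t ≤ w j then (1:ℝ) else 0)) volume 0 1 := by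
      have h := IntervalIntegrable.sum (μ := volume) (a := 0) (b := 1)
        (f := fun j t => c j * (if t ≤ w j then (1:ℝ) else 0))
        Finset.univ (fun j _ => hint j)
      have he : (∑ j : Fin n, fun t => c j * (if t ≤ w j then (1:ℝ) else 0))
          = fun t => ∑ j, c j * (if t ≤ w j then (1:ℝ) else 0) := by
        funext t; simp [Finset.sum_apply]
      rwa [he] at h
    -- compute the integral of the sum
    have hcalc : (∫ t in (0:ℝ)..1, ∑ j, c j * (if t ≤ w j then (1:ℝ) else 0))
        = ∑ j, c j * w j := by
      rw [intervalIntegral.integral_finset_sum (fun j _ => hint j)]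
      refine Finset.sum_congr rfl (fun j _ => ?_)
      rw [intervalIntegral.integral_const_mul, step_integral (hwb j).1 (hwb j).2]
    -- conclude
    have hmono : (∫ t in (0:ℝ)..1, (∑ j, c j * ind b j))
        ≤ ∫ t in (0:ℝ)..1, ∑ j, c j * (if t ≤ w j then (1:ℝ) else 0) :=
      integral_mono (by norm_num) intervalIntegrable_const hintsum hptwise
    rw [intervalIntegral.integral_const] at hmono
    rw [← hcalc]
    simpa using hmono
end

section
/- Let A be an m × n real matrix with the tree-constraint row structure, and let P = {z ∈ ℝⁿ : A z ≤ 0, 0 ≤ z ≤ 1}. Then P is an integral polytope: every extreme point of P has all of its coordinates in {0, 1}. -/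
/-- The polyhedron `P = {z : A z ≤ 0, 0 ≤ z ≤ 1}` of an `m × n` real matrix
`A` with the tree-constraint row structure is integral: every extreme point
of `P` has all of its coordinates in `{0, 1}`. -/
theorem tree_polyhedron_integral
    {m n : ℕ} (A : Matrix (Fin m) (Fin n) ℝ) (hA : TreeRowStructure A) :
    ∀ z ∈ Set.extremePoints ℝ
      {w : Fin n → ℝ | (∀ i, A.mulVec w i ≤ 0) ∧ ∀ j, 0 ≤ w j ∧ w j ≤ 1},
      ∀ j, z j = 0 ∨ z j = 1 := by
  intro z hz j
  by_contra hj
  push_neg at hj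
  obtain ⟨hj0, hj1⟩ := hj
  rw [mem_extremePoints] at hz
  obtain ⟨⟨hAz, hbox⟩, hext⟩ := hz
  -- helper: value of the i-th row of A ⬝ w
  have key : ∀ (w : Fin n → ℝ) (i : Fin m) (j₁ j₂ : Fin n), j₁ ≠ j₂ →
      A i j₁ = 1 → A i j₂ = -1 → (∀ k, k ≠ j₁ → k ≠ j₂ → A i k = 0) →
      A.mulVec w i = w j₁ - w j₂ := by
    intro w i j₁ j₂ hne h1 h2 h0
    have hmv : A.mulVec w i = ∑ k, A i k * w k := by
      simp [Matrix.mulVec, dotProduct]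
    rw [hmv, ← Finset.sum_subset (Finset.subset_univ ({j₁, j₂} : Finset (Fin n)))]
    · rw [Finset.sum_pair hne, h1, h2]; ring
    · intro k _ hk
      simp only [Finset.mem_insert, Finset.mem_singleton, not_or] at hk
      rw [h0 k hk.1 hk.2]; ring
  classical
  set S : Finset (Fin n) := Finset.univ.filter (fun k => z k ≠ 0 ∧ z k ≠ 1) with hS
  have hjS : j ∈ S := by simp [hS, hj0, hj1]
  have hSne : S.Nonempty := ⟨j, hjS⟩
  set ε : ℝ := S.inf' hSne (fun k => min (z k) (1 - z k)) with hε
  have hfrac : ∀ k ∈ S, 0 < z k ∧ z k < 1 := by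
    intro k hk
    simp only [hS, Finset.mem_filter, Finset.mem_univ, true_and] at hk
    exact ⟨lt_of_le_of_ne (hbox k).1 (Ne.symm hk.1), lt_of_le_of_ne (hbox k).2 hk.2⟩
  have hεpos : 0 < ε := by
    rw [hε, Finset.lt_inf'_iff]
    intro k hk
    obtain ⟨h1, h2⟩ := hfrac k hk
    simp only [lt_min_iff]
    constructor <;> linarith
  have hεlo : ∀ k ∈ S, ε ≤ z k := fun k hk =>
    le_trans (Finset.inf'_le _ hk) (min_le_left _ _)
  have hεhi : ∀ k ∈ S, ε ≤ 1 - z k := fun k hk =>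
    le_trans (Finset.inf'_le _ hk) (min_le_right _ _)
  set d : Fin n → ℝ := fun k => if k ∈ S then ε else 0 with hd
  -- both perturbations stay in P
  have hmem : ∀ s : ℝ, s = 1 ∨ s = -1 →
      (z + s • d) ∈ {w : Fin n → ℝ | (∀ i, A.mulVec w i ≤ 0) ∧ ∀ j, 0 ≤ w j ∧ w j ≤ 1} := by
    intro s hs
    have hs1 : -1 ≤ s ∧ s ≤ 1 := by rcases hs with h | h <;> simp [h]
    constructor
    · intro i
      obtain ⟨j₁, j₂, hne, h1, h2, h0⟩ := hA i
      have hrow := key z i j₁ j₂ hne h1 h2 h0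
      have hle : z j₁ - z j₂ ≤ 0 := by rw [← hrow]; exact hAz i
      rw [key (z + s • d) i j₁ j₂ hne h1 h2 h0]
      simp only [Pi.add_apply, Pi.smul_apply, smul_eq_mul, hd]
      by_cases h1S : j₁ ∈ S <;> by_cases h2S : j₂ ∈ S
      · simp only [h1S, h2S, if_pos]; linarith
      · -- j₁ fractional, j₂ not: z j₂ = 1
        have hz2 : z j₂ = 0 ∨ z j₂ = 1 := by
          by_contra h; push_neg at h
          exact h2S (by simp [hS, h.1, h.2])
        have hz2' : z j₂ = 1 := by
          rcases hz2 with h | h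
          · exfalso; have := (hfrac j₁ h1S).1; linarith
          · exact h
        simp only [h1S, if_pos, h2S, if_neg, if_false]
        have := hεhi j₁ h1S
        have := hs1.2
        nlinarith [hεpos]
      · -- j₂ fractional, j₁ not: z j₁ = 0
        have hz1 : z j₁ = 0 ∨ z j₁ = 1 := by
          by_contra h; push_neg at h
          exact h1S (by simp [hS, h.1, h.2])
        have hz1' : z j₁ = 0 := by
          rcases hz1 with h | h
          · exact h
          · exfalso; have := (hfrac j₂ h2S).2; linarith
        simp only [h1S, if_neg, h2S, if_pos, if_false]
        have := hεlo j₂ h2S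
        have := hs1.1
        nlinarith [hεpos]
      · simp only [h1S, h2S, if_neg, if_false]; linarith
    · intro k
      simp only [Pi.add_apply, Pi.smul_apply, smul_eq_mul, hd]
      by_cases hkS : k ∈ S
      · simp only [hkS, if_pos]
        have h1 := hεlo k hkS
        have h2 := hεhi k hkS
        constructor <;> nlinarith [hs1.1, hs1.2, hεpos]
      · simp only [hkS, if_neg, if_false, mul_zero, add_zero]
        exact hbox k
  have hmem1 := hmem 1 (Or.inl rfl)
  have hmem2 := hmem (-1) (Or.inr rfl)
  have hseg : z ∈ openSegment ℝ (z + (1:ℝ) • d) (z + (-1:ℝ) • d) := by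
    refine ⟨1/2, 1/2, by norm_num, by norm_num, by norm_num, ?_⟩
    funext k
    simp only [Pi.add_apply, Pi.smul_apply, smul_eq_mul, Pi.smul_apply, Pi.add_apply]
    ring
  have := (hext _ hmem1 _ hmem2 hseg).1
  have hcontra := congrFun this j
  simp only [Pi.add_apply, Pi.smul_apply, smul_eq_mul, one_mul, hd, hjS, if_pos] at hcontra
  linarith
end

section
/- Let T be a labeled rooted tree all of whose node labels satisfy a(s) ≥ b(s) ≥ 0. For a pruning P of T define f(P) = Σ_{s interior node of P} a(s) and g(P) = Σ_{s interior node of P} b(s). Let D ≥ 0 and assume the primal problem is feasible: some pruning P₀ of T satisfies g(P₀) ≥ D. Then the following are equivalent: (i) strong duality holds, i.e., there exists β ≥ 0 such that min over all prunings P of T of (f(P) + β·(D − g(P))) equals min{f(P) : P a pruning of T with g(P) ≥ D}; (ii) there exist β ≥ 0 and a pruning P* of T such that P* minimizes f(P) − β·g(P) over all prunings of T and g(P*) = D. -/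
/-- `f(P)` : sum of `a(s)` over the interior nodes of `P` (retained `I_X`). -/
noncomputable def sumA : LTree → ℝ
  | .node a _ k c => if k = 0 then 0 else a + ∑ i : Fin k, sumA (c i)

/-- `g(P)` : sum of `b(s)` over the interior nodes of `P` (retained `I_Y`). -/
noncomputable def sumB : LTree → ℝ
  | .node _ b k c => if k = 0 then 0 else b + ∑ i : Fin k, sumB (c i)

lemma forall_of_pruning {p : ℝ → ℝ → Prop} :
    ∀ {P T : LTree}, IsPruning P T → ForallNodes p T → ForallNodes p P := by
  intro P T h
  induction h with
  | root a b k c f0 => exact fun hT => ⟨hT.1, fun i => i.elim0⟩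
  | step a b k hk c P h ih => exact fun hT => ⟨hT.1, fun i => ih i (hT.2 i)⟩

lemma sum_bounds {P : LTree} (h : ForallNodes (fun a b => b ≤ a ∧ 0 ≤ b) P) :
    0 ≤ sumB P ∧ sumB P ≤ sumA P := by
  induction P with
  | node a b k c ih =>
    obtain ⟨⟨hba, hb⟩, hc⟩ := h
    by_cases hk : k = 0
    · simp [sumA, sumB, hk]
    · simp only [sumA, sumB, if_neg hk]
      have h1 : (0:ℝ) ≤ ∑ i, sumB (c i) :=
        Finset.sum_nonneg fun i _ => (ih i (hc i)).1
      have h2 : ∑ i, sumB (c i) ≤ ∑ i, sumA (c i) :=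
        Finset.sum_le_sum fun i _ => (ih i (hc i)).2
      constructor <;> linarith

lemma root_pruning (T : LTree) :
    ∃ P, IsPruning P T ∧ sumA P = 0 ∧ sumB P = 0 := by
  obtain ⟨a, b, k, c⟩ := T
  exact ⟨.node a b 0 Fin.elim0, .root a b k c Fin.elim0,
    by simp [sumA], by simp [sumB]⟩

/-- **Characterization of strong duality in the IB tree problem**
(Theorem 4).  Suppose every node label of `T` satisfies `a(s) ≥ b(s) ≥ 0`,
`D ≥ 0`, and the primal problem is feasible (some pruning `P₀` of `T` has
`g(P₀) ≥ D`).  Then strong duality holds — i.e. there is a `β ≥ 0` for which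
the minimum over prunings `P` of the Lagrangian `f(P) + β (D − g(P))` equals
the minimum of `f(P)` over feasible prunings — if and only if there exist a
`β ≥ 0` and a pruning `P*` of `T` minimizing `f − β·g` over all prunings with
`g(P*) = D` exactly. -/
theorem strong_duality_characterization (T : LTree)
    (hlab : ForallNodes (fun a b => b ≤ a ∧ 0 ≤ b) T)
    (D : ℝ) (hD : 0 ≤ D)
    (hfeas : ∃ P₀ : LTree, IsPruning P₀ T ∧ D ≤ sumB P₀) :
    (∃ β : ℝ, 0 ≤ β ∧ ∃ v : ℝ,
        IsLeast {w : ℝ | ∃ P : LTree, IsPruning P T ∧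
          w = sumA P + β * (D - sumB P)} v ∧
        IsLeast {w : ℝ | ∃ P : LTree, IsPruning P T ∧ D ≤ sumB P ∧
          w = sumA P} v) ↔
    (∃ β : ℝ, 0 ≤ β ∧ ∃ Pstar : LTree, IsPruning Pstar T ∧
        (∀ P : LTree, IsPruning P T →
          sumA Pstar - β * sumB Pstar ≤ sumA P - β * sumB P) ∧
        sumB Pstar = D) := by
  constructor
  · rintro ⟨β, hβ, v, ⟨hmem1, hlb1⟩, ⟨P2, hP2, hgP2, hv2⟩, hlb2⟩
    -- Lagrangian value of P2 is at least v
    have hL : v ≤ sumA P2 + β * (D - sumB P2) := hlb1 ⟨P2, hP2, rfl⟩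
    have hnp : β * (D - sumB P2) ≤ 0 :=
      mul_nonpos_of_nonneg_of_nonpos hβ (by linarith)
    have hzero : β * (D - sumB P2) = 0 := le_antisymm hnp (by linarith [hv2 ▸ hL])
    have hDg : sumB P2 = D := by
      rcases mul_eq_zero.1 hzero with hb0 | hd0
      · -- β = 0 : show v = 0 hence sumB P2 = D
        obtain ⟨Pr, hPr, hAr, hBr⟩ := root_pruning T
        have h0mem : (0:ℝ) ∈ {w : ℝ | ∃ P : LTree, IsPruning P T ∧
            w = sumA P + β * (D - sumB P)} :=
          ⟨Pr, hPr, by rw [hAr, hb0]; ring⟩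
        have hv0 : v ≤ 0 := hlb1 h0mem
        have hb2 := sum_bounds (forall_of_pruning hP2 hlab)
        linarith
      · linarith
    refine ⟨β, hβ, P2, hP2, fun P hP => ?_, hDg⟩
    have hLP : v ≤ sumA P + β * (D - sumB P) := hlb1 ⟨P, hP, rfl⟩
    have hexp : β * (D - sumB P) = β * D - β * sumB P := by ring
    have hexp2 : β * (D - sumB P2) = β * D - β * sumB P2 := by ring
    linarith [hv2 ▸ hLP]
  · rintro ⟨β, hβ, Ps, hPs, hmin, hg⟩
    refine ⟨β, hβ, sumA Ps, ⟨⟨Ps, hPs, by rw [hg]; ring⟩, ?_⟩,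
      ⟨Ps, hPs, hg ▸ le_refl D, rfl⟩, ?_⟩
    · rintro w ⟨P, hP, rfl⟩
      have h := hmin P hP
      have hexp : β * (D - sumB P) = β * D - β * sumB P := by ring
      rw [← hg]
      linarith
    · rintro w ⟨P, hP, hgP, rfl⟩
      have h := hmin P hP
      have hnn : 0 ≤ β * (sumB P - D) :=
        mul_nonneg hβ (by linarith)
      rw [← hg] at hnn
      nlinarith
end
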